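/- arXiv:1606.07643 — 4 statements merged into one kernel-verified Lean document; each statement's English description precedes it below -/
import Mathlib

section
/- Let f : [0,∞) → [0,∞) satisfy f(0) = 0 and α ≤ f'(s) ≤ β for all s > 0 with 0 < α ≤ β, and let ν(s) = f(s)/s for s > 0. Define h : ℝ³ → ℝ³ by h(r) = ν(|r|) r for r ≠ 0 and h(0) = 0. Then h is strongly monotone: (h(r) − h(t)) · (r − t) ≥ α |r − t|² for all r, t ∈ ℝ³. -/
open RealInnerProductSpace

set_option maxHeartbeats 1000000

/-- the vector nonlinearity `h(r) = ν(|r|) r` (with `h 0 = 0`) built from a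
material law `f` with `f 0 = 0` and `α ≤ f' ≤ β` on `(0,∞)` is strongly monotone with
constant `α`. -/
theorem stmt2 (f f' ν : ℝ → ℝ) (α β : ℝ) (hα : 0 < α) (hαβ : α ≤ β)
    (hrange : ∀ s ∈ Set.Ici (0:ℝ), 0 ≤ f s)
    (hf0 : f 0 = 0)
    (hfc : ContinuousOn f (Set.Ici 0))
    (hderiv : ∀ s > (0:ℝ), HasDerivAt f (f' s) s)
    (hbound : ∀ s > (0:ℝ), α ≤ f' s ∧ f' s ≤ β)
    (hν : ∀ s > (0:ℝ), ν s = f s / s)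
    (h : EuclideanSpace ℝ (Fin 3) → EuclideanSpace ℝ (Fin 3))
    (hh : ∀ r : EuclideanSpace ℝ (Fin 3), r ≠ 0 → h r = ν ‖r‖ • r)
    (hh0 : h 0 = 0) :
    ∀ r t : EuclideanSpace ℝ (Fin 3), α * ‖r - t‖ ^ 2 ≤ ⟪h r - h t, r - t⟫ := by
  -- g = f - α·id is monotone on [0,∞)
  have hgmono : MonotoneOn (fun s => f s - α * s) (Set.Ici 0) := by
    apply monotoneOn_of_hasDerivWithinAt_nonneg (convex_Ici 0)
      (f' := fun s => f' s - α)
      (hfc.sub (continuousOn_const.mul continuousOn_id))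
    · intro x hx
      rw [interior_Ici] at hx
      exact (((hderiv x hx).sub ((hasDerivAt_id x).const_mul α)).hasDerivWithinAt).congr_deriv
        (by ring)
    · intro x hx
      rw [interior_Ici] at hx
      have := (hbound x hx).1
      linarith
  have hfα : ∀ s : ℝ, 0 ≤ s → α * s ≤ f s := by
    intro s hs
    have := hgmono (le_refl (0:ℝ)) hs hs
    simp only [hf0] at this
    linarith
  intro r t
  by_cases hr0 : r = 0
  · by_cases ht0 : t = 0
    · simp [hr0, ht0, hh0]
    · rw [hr0, hh0]
      have ht : (0:ℝ) < ‖t‖ := norm_pos_iff.mpr ht0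
      rw [hh t ht0]
      have e1 : ⟪(0:EuclideanSpace ℝ (Fin 3)) - ν ‖t‖ • t, 0 - t⟫ = ν ‖t‖ * ‖t‖ ^ 2 := by
        rw [zero_sub, zero_sub, inner_neg_neg, real_inner_smul_left,
          real_inner_self_eq_norm_sq]
      rw [e1]
      have hft := hfα ‖t‖ ht.le
      rw [hν ‖t‖ ht]
      have e2 : f ‖t‖ / ‖t‖ * ‖t‖ ^ 2 = f ‖t‖ * ‖t‖ := by
        field_simp
      rw [e2]
      simp only [zero_sub, norm_neg]
      nlinarith
  · by_cases ht0 : t = 0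
    · rw [ht0, hh0]
      have hr : (0:ℝ) < ‖r‖ := norm_pos_iff.mpr hr0
      rw [hh r hr0]
      have e1 : ⟪ν ‖r‖ • r - 0, r - 0⟫ = ν ‖r‖ * ‖r‖ ^ 2 := by
        rw [sub_zero, sub_zero, real_inner_smul_left, real_inner_self_eq_norm_sq]
      rw [e1]
      have hfr := hfα ‖r‖ hr.le
      rw [hν ‖r‖ hr]
      have e2 : f ‖r‖ / ‖r‖ * ‖r‖ ^ 2 = f ‖r‖ * ‖r‖ := by
        field_simp
      rw [e2]
      simp only [sub_zero]
      nlinarith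
    · -- general case
      have hr : (0:ℝ) < ‖r‖ := norm_pos_iff.mpr hr0
      have ht : (0:ℝ) < ‖t‖ := norm_pos_iff.mpr ht0
      have hcab : ⟪r, t⟫ ≤ ‖r‖ * ‖t‖ := real_inner_le_norm r t
      rw [hh r hr0, hh t ht0]
      have err : ⟪r, r⟫ = ‖r‖ ^ 2 := real_inner_self_eq_norm_sq r
      have ett : ⟪t, t⟫ = ‖t‖ ^ 2 := real_inner_self_eq_norm_sq t
      have etr : ⟪t, r⟫ = ⟪r, t⟫ := real_inner_comm r t
      have hexp : ⟪ν ‖r‖ • r - ν ‖t‖ • t, r - t⟫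
          = ν ‖r‖ * ‖r‖ ^ 2 + ν ‖t‖ * ‖t‖ ^ 2 - (ν ‖r‖ + ν ‖t‖) * ⟪r, t⟫ := by
        rw [inner_sub_left, inner_sub_right, inner_sub_right,
          real_inner_smul_left, real_inner_smul_left, real_inner_smul_left,
          real_inner_smul_left, err, ett, etr]
        ring
      rw [hexp]
      have hnorm : ‖r - t‖ ^ 2 = ‖r‖ ^ 2 - 2 * ⟪r, t⟫ + ‖t‖ ^ 2 := by
        rw [← real_inner_self_eq_norm_sq, inner_sub_left, inner_sub_right, inner_sub_right,
          err, ett, etr]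
        ring
      rw [hnorm]
      have hva : ν ‖r‖ = f ‖r‖ / ‖r‖ := hν ‖r‖ hr
      have hvb : ν ‖t‖ = f ‖t‖ / ‖t‖ := hν ‖t‖ ht
      have hfa : f ‖r‖ = ν ‖r‖ * ‖r‖ := by rw [hva]; field_simp
      have hfb : f ‖t‖ = ν ‖t‖ * ‖t‖ := by rw [hvb]; field_simp
      have hνa : α ≤ ν ‖r‖ := by
        have := hfα ‖r‖ hr.le
        rw [hva, le_div_iff₀ hr]
        linarith
      have hνb : α ≤ ν ‖t‖ := by
        have := hfα ‖t‖ ht.le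
        rw [hvb, le_div_iff₀ ht]
        linarith
      have hmono : 0 ≤ ((ν ‖r‖ - α) * ‖r‖ - (ν ‖t‖ - α) * ‖t‖) * (‖r‖ - ‖t‖) := by
        rcases le_total ‖r‖ ‖t‖ with hab | hab
        · have := hgmono hr.le ht.le hab
          simp only at this
          have h1 : (ν ‖r‖ - α) * ‖r‖ - (ν ‖t‖ - α) * ‖t‖ ≤ 0 := by nlinarith [hfa, hfb]
          have h2 : ‖r‖ - ‖t‖ ≤ 0 := by linarith
          nlinarith
        · have := hgmono ht.le hr.le hab
          simp only at this
          have h1 : 0 ≤ (ν ‖r‖ - α) * ‖r‖ - (ν ‖t‖ - α) * ‖t‖ := by nlinarith [hfa, hfb]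
          nlinarith
      nlinarith [mul_nonneg (by linarith : (0:ℝ) ≤ ν ‖r‖ + ν ‖t‖ - 2 * α)
        (by linarith : (0:ℝ) ≤ ‖r‖ * ‖t‖ - ⟪r, t⟫), hmono]
end

section
/- Let f : [0,∞) → [0,∞) satisfy f(0) = 0 and α ≤ f'(s) ≤ β for all s > 0 with 0 < α ≤ β, ν(s) = f(s)/s for s > 0, and h(r) = ν(|r|) r (with h(0) = 0). Then h is Lipschitz continuous with constant 3β: |h(r) − h(t)| ≤ 3β |r − t| for all r, t ∈ ℝ³. -/
open RealInnerProductSpace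

/-- the vector nonlinearity `h(r) = ν(|r|) r` (with `h 0 = 0`) built from a
material law `f` with `f 0 = 0` and `α ≤ f' ≤ β` on `(0,∞)` is Lipschitz continuous with
constant `3β`. -/
theorem stmt3 (f f' ν : ℝ → ℝ) (α β : ℝ) (hα : 0 < α) (hαβ : α ≤ β)
    (hrange : ∀ s ∈ Set.Ici (0:ℝ), 0 ≤ f s)
    (hf0 : f 0 = 0)
    (hfc : ContinuousOn f (Set.Ici 0))
    (hderiv : ∀ s > (0:ℝ), HasDerivAt f (f' s) s)
    (hbound : ∀ s > (0:ℝ), α ≤ f' s ∧ f' s ≤ β)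
    (hν : ∀ s > (0:ℝ), ν s = f s / s)
    (h : EuclideanSpace ℝ (Fin 3) → EuclideanSpace ℝ (Fin 3))
    (hh : ∀ r : EuclideanSpace ℝ (Fin 3), r ≠ 0 → h r = ν ‖r‖ • r)
    (hh0 : h 0 = 0) :
    ∀ r t : EuclideanSpace ℝ (Fin 3), ‖h r - h t‖ ≤ 3 * β * ‖r - t‖ := by
  have hβ : 0 < β := lt_of_lt_of_le hα hαβ
  have hint : interior (Set.Ici (0:ℝ)) = Set.Ioi 0 := interior_Ici
  -- f is monotone on [0, ∞)
  have hmono : MonotoneOn f (Set.Ici 0) := by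
    apply monotoneOn_of_deriv_nonneg (convex_Ici 0) hfc
    · rw [hint]
      intro x hx
      exact (hderiv x hx).differentiableAt.differentiableWithinAt
    · rw [hint]
      intro x hx
      rw [(hderiv x hx).deriv]
      exact le_trans hα.le (hbound x hx).1
  -- β-Lipschitz upper bound
  have hlip : ∀ a b : ℝ, 0 ≤ b → b ≤ a → f a - f b ≤ β * (a - b) := by
    intro a b hb hba
    have hg : MonotoneOn (fun s => β * s - f s) (Set.Ici 0) := by
      apply monotoneOn_of_deriv_nonneg (convex_Ici 0)
        ((continuousOn_const.mul continuousOn_id).sub hfc)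
      · rw [hint]
        intro x hx
        exact (((hasDerivAt_id x).const_mul β).sub (hderiv x hx)).differentiableAt.differentiableWithinAt
      · rw [hint]
        intro x hx
        rw [show deriv ((fun x => β) * id - f) x = β * 1 - f' x from (((hasDerivAt_id x).const_mul β).sub (hderiv x hx)).deriv]
        simp only [mul_one]
        linarith [(hbound x hx).2]
    have := hg hb (le_trans hb hba) hba
    simp only at this
    linarith
  have hfub : ∀ a : ℝ, 0 ≤ a → f a ≤ β * a := by
    intro a ha
    have := hlip a 0 le_rfl ha
    rw [hf0] at this; linarith
  -- key one-sided lemma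
  have key : ∀ r t : EuclideanSpace ℝ (Fin 3), ‖t‖ ≤ ‖r‖ →
      ‖h r - h t‖ ≤ 3 * β * ‖r - t‖ := by
    intro r t hle
    by_cases hr : r = 0
    · have ht : t = 0 := by
        have : ‖t‖ ≤ 0 := by simpa [hr] using hle
        exact norm_le_zero_iff.mp this
      simp only [hr, ht, hh0, sub_self, norm_zero]
      positivity

    by_cases ht : t = 0
    · rw [ht, hh0, sub_zero, hh r hr, norm_smul]
      have ha : (0:ℝ) < ‖r‖ := norm_pos_iff.mpr hr
      rw [hν ‖r‖ ha]
      have hfa : 0 ≤ f ‖r‖ := hrange _ ha.le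
      rw [Real.norm_eq_abs, abs_of_nonneg (show (0:ℝ) ≤ f ‖r‖ / ‖r‖ by positivity),
        div_mul_cancel₀ _ ha.ne']
      have := hfub ‖r‖ ha.le
      have h3 : β * ‖r‖ ≤ 3 * β * ‖r‖ := by nlinarith
      calc f ‖r‖ ≤ β * ‖r‖ := this
        _ ≤ 3 * β * ‖r‖ := h3
        _ = 3 * β * ‖r - 0‖ := by rw [sub_zero]
    · set a := ‖r‖ with ha_def
      set b := ‖t‖ with hb_def
      have ha : (0:ℝ) < a := norm_pos_iff.mpr hr
      have hb : (0:ℝ) < b := norm_pos_iff.mpr ht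
      rw [hh r hr, hh t ht]
      have hdec : ν a • r - ν b • t = ν a • (r - t) + (ν a - ν b) • t := by
        rw [smul_sub, sub_smul]; abel
      rw [hdec]
      have hnorm : ‖ν a • (r - t) + (ν a - ν b) • t‖ ≤
          |ν a| * ‖r - t‖ + |ν a - ν b| * b := by
        calc ‖ν a • (r - t) + (ν a - ν b) • t‖
            ≤ ‖ν a • (r - t)‖ + ‖(ν a - ν b) • t‖ := norm_add_le _ _
          _ = |ν a| * ‖r - t‖ + |ν a - ν b| * b := by
              rw [norm_smul, norm_smul, Real.norm_eq_abs, Real.norm_eq_abs]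
      -- bounds
      have hνa : ν a = f a / a := hν a ha
      have hνb : ν b = f b / b := hν b hb
      have hfa0 : 0 ≤ f a := hrange _ ha.le
      have hfb0 : 0 ≤ f b := hrange _ hb.le
      have hfaub : f a ≤ β * a := hfub a ha.le
      have hfbub : f b ≤ β * b := hfub b hb.le
      have hmab : 0 ≤ f a - f b := by
        have := hmono hb.le ha.le hle; linarith
      have hlab : f a - f b ≤ β * (a - b) := hlip a b hb.le hle
      have hνabound : |ν a| ≤ β := by
        rw [hνa, abs_of_nonneg (by positivity)]
        rw [div_le_iff₀ ha]; linarith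
      have hdiff : |ν a - ν b| * b ≤ 2 * β * (a - b) := by
        have habs : |ν a - ν b| * b = |(ν a - ν b) * b| := by
          rw [abs_mul, abs_of_pos hb]
        have e : (ν a - ν b) * b = (f a * b - f b * a) / a := by
          rw [hνa, hνb]
          field_simp
        rw [habs, e, abs_div, abs_of_pos ha, div_le_iff₀ ha, abs_le]
        constructor
        · nlinarith
        · nlinarith
      have hab : a - b ≤ ‖r - t‖ := by
        have := norm_sub_norm_le r t
        simpa [ha_def, hb_def] using this
      calc ‖ν a • (r - t) + (ν a - ν b) • t‖
          ≤ |ν a| * ‖r - t‖ + |ν a - ν b| * b := hnorm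
        _ ≤ β * ‖r - t‖ + 2 * β * (a - b) := by
            have h1 : |ν a| * ‖r - t‖ ≤ β * ‖r - t‖ :=
              mul_le_mul_of_nonneg_right hνabound (norm_nonneg _)
            linarith
        _ ≤ β * ‖r - t‖ + 2 * β * ‖r - t‖ := by nlinarith
        _ = 3 * β * ‖r - t‖ := by ring
  intro r t
  rcases le_total ‖t‖ ‖r‖ with hle | hle
  · exact key r t hle
  · have := key t r hle
    rw [norm_sub_rev, norm_sub_rev r t]
    exact this
end

section
/- Let f : [0,∞) → [0,∞) be continuously differentiable with f(0) = 0, α ≤ f'(s) ≤ β for all s (0 < α ≤ β), and set ν(s) = f(s)/s for s > 0, ν(0) = f'(0). Define the differential reluctivity tensor ν_d(r) = ν(|r|) I + (ν'(|r|)/|r|) r ⊗ r for r ≠ 0 and ν_d(0) = ν(0) I. Then there exist constants 0 < α_d ≤ β_d such that for all r, s ∈ ℝ³: |ν_d(s)| ≤ β_d (operator norm bound) and rᵀ ν_d(s) r ≥ α_d |r|². -/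
open RealInnerProductSpace

/-- the differential reluctivity tensor
`ν_d(r) = ν(|r|) I + (ν'(|r|)/|r|) r ⊗ r` (with `ν_d(0) = ν(0) I`) is uniformly bounded
(in operator norm) and uniformly elliptic: there are `0 < α_d ≤ β_d` with
`‖ν_d(s)‖ ≤ β_d` and `rᵀ ν_d(s) r ≥ α_d |r|²` for all `r, s`. -/
theorem stmt4 (f f' ν ν' : ℝ → ℝ) (α β : ℝ) (hα : 0 < α) (hαβ : α ≤ β)
    (hrange : ∀ s ∈ Set.Ici (0:ℝ), 0 ≤ f s)
    (hf0 : f 0 = 0)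
    (hderiv : ∀ s ∈ Set.Ici (0:ℝ), HasDerivWithinAt f (f' s) (Set.Ici 0) s)
    (hf'cont : ContinuousOn f' (Set.Ici 0))
    (hbound : ∀ s ∈ Set.Ici (0:ℝ), α ≤ f' s ∧ f' s ≤ β)
    (hν : ∀ s > (0:ℝ), ν s = f s / s) (hν0 : ν 0 = f' 0)
    (hν' : ∀ s > (0:ℝ), HasDerivAt ν (ν' s) s)
    (νd : EuclideanSpace ℝ (Fin 3) →
      EuclideanSpace ℝ (Fin 3) →L[ℝ] EuclideanSpace ℝ (Fin 3))
    (hνd : ∀ r : EuclideanSpace ℝ (Fin 3), r ≠ 0 →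
      νd r = ν ‖r‖ • ContinuousLinearMap.id ℝ (EuclideanSpace ℝ (Fin 3)) +
        (ν' ‖r‖ / ‖r‖) • (innerSL ℝ r).smulRight r)
    (hνd0 : νd 0 = ν 0 • ContinuousLinearMap.id ℝ (EuclideanSpace ℝ (Fin 3))) :
    ∃ αd βd : ℝ, 0 < αd ∧ αd ≤ βd ∧
      ∀ s : EuclideanSpace ℝ (Fin 3), ‖νd s‖ ≤ βd ∧
        ∀ r : EuclideanSpace ℝ (Fin 3), αd * ‖r‖ ^ 2 ≤ ⟪r, νd s r⟫ := by
  have hmem : ∀ x : ℝ, 0 ≤ x → x ∈ Set.Ici (0:ℝ) := fun x hx => Set.mem_Ici.2 hx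
  -- bounds on f:  α*t ≤ f t ≤ β*t  for t ≥ 0
  have hfub : ∀ t : ℝ, 0 ≤ t → f t ≤ β * t := by
    intro t ht
    have h := norm_image_sub_le_of_norm_deriv_le_segment'
      (f := f) (f' := f') (a := 0) (b := t) (C := β)
      (fun x hx => (hderiv x (hmem x hx.1)).mono (fun y hy => hmem y hy.1))
      (fun x hx => by
        have := hbound x (hmem x hx.1)
        rw [Real.norm_eq_abs, abs_le]
        constructor <;> nlinarith [this.1, this.2])
      t (Set.right_mem_Icc.2 ht)
    rw [hf0, sub_zero, sub_zero, Real.norm_eq_abs] at h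
    calc f t ≤ |f t| := le_abs_self _
    _ ≤ β * t := h
  have hflb : ∀ t : ℝ, 0 ≤ t → α * t ≤ f t := by
    intro t ht
    have h := norm_image_sub_le_of_norm_deriv_le_segment'
      (f := fun s => β * s - f s) (f' := fun s => β - f' s) (a := 0) (b := t) (C := β - α)
      (fun x hx => by
        have h1 : HasDerivWithinAt (fun s => β * s - f s) (β * 1 - f' x) (Set.Icc 0 t) x :=
          (((hasDerivWithinAt_id x _).const_mul β).sub
            ((hderiv x (hmem x hx.1)).mono (fun y hy => hmem y hy.1)))
        simpa using h1)
      (fun x hx => by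
        have := hbound x (hmem x hx.1)
        show ‖β - f' x‖ ≤ β - α
        rw [Real.norm_eq_abs, abs_le]
        constructor <;> linarith [this.1, this.2])
      t (Set.right_mem_Icc.2 ht)
    simp only [hf0, mul_zero, sub_zero, Real.norm_eq_abs] at h
    have h2 : β * t - f t ≤ (β - α) * t := le_trans (le_abs_self _) h
    linarith
  -- bounds on ν
  have hνb : ∀ t : ℝ, 0 ≤ t → α ≤ ν t ∧ ν t ≤ β := by
    intro t ht
    rcases eq_or_lt_of_le ht with h | h
    · rw [← h, hν0]; exact hbound 0 (hmem 0 le_rfl)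
    · rw [hν t h]
      constructor
      · rw [le_div_iff₀ h]; simpa [mul_comm] using hflb t ht
      · rw [div_le_iff₀ h]; simpa [mul_comm] using hfub t ht
  -- formula for ν' : ν' t * t = f' t - ν t
  have hν'eq : ∀ t : ℝ, 0 < t → ν' t * t = f' t - ν t := by
    intro t ht
    have hft : HasDerivAt f (f' t) t :=
      (hderiv t (hmem t ht.le)).hasDerivAt (Ici_mem_nhds ht)
    have hq : HasDerivAt (fun s => f s / s) ((f' t * t - f t * 1) / t ^ 2) t :=
      hft.div (hasDerivAt_id t) ht.ne'
    have heq : ν =ᶠ[nhds t] fun s => f s / s := by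
      filter_upwards [Ioi_mem_nhds ht] with x hx using hν x hx
    have hν't : HasDerivAt ν ((f' t * t - f t * 1) / t ^ 2) t := hq.congr_of_eventuallyEq heq
    have : ν' t = (f' t * t - f t * 1) / t ^ 2 := HasDerivAt.unique (hν' t ht) hν't
    rw [this, hν t ht]
    field_simp
  -- bound on |ν' t| * t
  have hν'b : ∀ t : ℝ, 0 < t → |ν' t| * t ≤ β - α := by
    intro t ht
    have h1 := hbound t (hmem t ht.le)
    have h2 := hνb t ht.le
    have h3 : |ν' t * t| ≤ β - α := by
      rw [hν'eq t ht, abs_le]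
      constructor <;> linarith [h1.1, h1.2, h2.1, h2.2]
    rwa [abs_mul, abs_of_pos ht] at h3
  refine ⟨α, 2 * β, hα, by linarith, fun s => ?_⟩
  rcases eq_or_ne s 0 with rfl | hs
  · rw [hνd0]
    have hb := hbound 0 (hmem 0 le_rfl)
    have hν0b : α ≤ ν 0 ∧ ν 0 ≤ β := by rw [hν0]; exact hb
    constructor
    · apply ContinuousLinearMap.opNorm_le_bound _ (by linarith)
      intro x
      simp only [ContinuousLinearMap.smul_apply, ContinuousLinearMap.id_apply]
      rw [norm_smul, Real.norm_eq_abs]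
      have : |ν 0| ≤ 2 * β := by rw [abs_le]; exact ⟨by linarith [hν0b.1], by linarith [hν0b.2]⟩
      have h2 := mul_le_mul_of_nonneg_right this (norm_nonneg x)
      linarith
    · intro r
      simp only [ContinuousLinearMap.smul_apply, ContinuousLinearMap.id_apply,
        real_inner_smul_right, real_inner_self_eq_norm_sq]
      have := mul_le_mul_of_nonneg_right hν0b.1 (sq_nonneg ‖r‖)
      linarith
  · have ht : (0:ℝ) < ‖s‖ := norm_pos_iff.2 hs
    set t := ‖s‖ with htdef
    have hνt := hνb t ht.le
    have hν't := hν'b t ht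
    have hf't := hbound t (hmem t ht.le)
    rw [hνd s hs]
    constructor
    · apply ContinuousLinearMap.opNorm_le_bound _ (by linarith)
      intro x
      simp only [ContinuousLinearMap.add_apply, ContinuousLinearMap.smul_apply,
        ContinuousLinearMap.id_apply, ContinuousLinearMap.smulRight_apply, innerSL_apply_apply]
      have h1 : ‖ν t • x + (ν' t / t) • ⟪s, x⟫ • s‖ ≤
          ‖ν t • x‖ + ‖(ν' t / t) • ⟪s, x⟫ • s‖ := norm_add_le _ _
      rw [norm_smul, norm_smul, norm_smul] at h1
      simp only [Real.norm_eq_abs] at h1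
      simp only [← htdef] at h1 ⊢
      have h2 : |⟪s, x⟫| ≤ t * ‖x‖ := abs_real_inner_le_norm s x
      have h3 : |ν' t / t| = |ν' t| / t := by rw [abs_div, abs_of_pos ht]
      have h4 : |ν t| ≤ β := by rw [abs_le]; exact ⟨by linarith [hνt.1], hνt.2⟩
      rw [h3] at h1
      have h5 : |ν' t| / t * (|⟪s, x⟫| * t) ≤ |ν' t| / t * (t * ‖x‖ * t) := by
        apply mul_le_mul_of_nonneg_left _ (by positivity)
        nlinarith
      have h6 : |ν' t| / t * (t * ‖x‖ * t) = |ν' t| * t * ‖x‖ := by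
        field_simp
      have h7 : |ν' t| * t * ‖x‖ ≤ (β - α) * ‖x‖ :=
        mul_le_mul_of_nonneg_right hν't (norm_nonneg x)
      have h8 : |ν t| * ‖x‖ ≤ β * ‖x‖ := mul_le_mul_of_nonneg_right h4 (norm_nonneg x)
      have h9 : |⟪s, x⟫| * t ≤ t * ‖x‖ * t := by nlinarith
      have h10 : 0 ≤ α * ‖x‖ := mul_nonneg hα.le (norm_nonneg x)
      linarith
    · intro r
      have hform : ⟪r, (ν t • ContinuousLinearMap.id ℝ (EuclideanSpace ℝ (Fin 3)) +
          (ν' t / t) • (innerSL ℝ s).smulRight s) r⟫ =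
          ν t * ‖r‖ ^ 2 + (ν' t / t) * ⟪s, r⟫ ^ 2 := by
        simp only [ContinuousLinearMap.add_apply, ContinuousLinearMap.smul_apply,
          ContinuousLinearMap.id_apply, ContinuousLinearMap.smulRight_apply, innerSL_apply_apply,
          inner_add_right, real_inner_smul_right, real_inner_self_eq_norm_sq]
        rw [real_inner_comm r s]
        ring
      rw [hform]
      set p : ℝ := ⟪s, r⟫ with hp
      rcases le_or_gt 0 (ν' t / t) with hc | hc
      · have h1 : 0 ≤ (ν' t / t) * p ^ 2 := mul_nonneg hc (sq_nonneg p)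
        have h2 : α * ‖r‖ ^ 2 ≤ ν t * ‖r‖ ^ 2 :=
          mul_le_mul_of_nonneg_right hνt.1 (sq_nonneg _)
        linarith
      · have hcs : p ^ 2 ≤ t ^ 2 * ‖r‖ ^ 2 := by
          have h1 : |p| ≤ t * ‖r‖ := abs_real_inner_le_norm s r
          nlinarith [abs_nonneg p, sq_abs p, norm_nonneg r]
        have h2 : (ν' t / t) * (t ^ 2 * ‖r‖ ^ 2) ≤ (ν' t / t) * p ^ 2 :=
          mul_le_mul_of_nonpos_left hcs hc.le
        have h3 : (ν' t / t) * (t ^ 2 * ‖r‖ ^ 2) = ν' t * t * ‖r‖ ^ 2 := by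
          field_simp
        have h4 : ν t + ν' t * t = f' t := by linarith [hν'eq t ht]
        have h6 : α * ‖r‖ ^ 2 ≤ f' t * ‖r‖ ^ 2 :=
          mul_le_mul_of_nonneg_right hf't.1 (sq_nonneg _)
        have h7 : f' t * ‖r‖ ^ 2 = ν t * ‖r‖ ^ 2 + ν' t * t * ‖r‖ ^ 2 := by
          rw [← h4]; ring
        linarith
end

section
/- Let f : Γ × [0,∞) → [0,∞) satisfy, for ρ-almost all y ∈ Γ: f(y, 0) = 0 and α ≤ ∂_s f(y, s) ≤ β with constants 0 < α ≤ β independent of y. Let h(y, r) = ν(y, |r|) r with ν(y, s) = f(y, s)/s. Then for ρ-almost all y, u ∈ V ↦ ⟨A(y) u, v⟩ := ∫_D h(y, curl u) · curl v dx defines an operator A(y) : V → V* that is strongly monotone with constant α and Lipschitz with constant 3β, both uniformly in y; consequently the parametric problem A(y) u(y) = F has a unique solution with ‖u(y)‖_V ≤ C_F ‖J‖₂/α uniformly in y. -/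
open MeasureTheory RealInnerProductSpace



section Pointwise

variable {E : Type*} [NormedAddCommGroup E] [InnerProductSpace ℝ E]
variable {g : ℝ → ℝ} {α β : ℝ}

/-- Two-sided mean value bound on `Ici 0`. -/
lemma stmt15_mvt (dg : ℝ → ℝ)
    (hderiv : ∀ s ∈ Set.Ici (0:ℝ), HasDerivWithinAt g (dg s) (Set.Ici 0) s)
    (hbnd : ∀ s ∈ Set.Ici (0:ℝ), α ≤ dg s ∧ dg s ≤ β) :
    ∀ t ∈ Set.Ici (0:ℝ), ∀ s ∈ Set.Ici (0:ℝ), t ≤ s →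
      α * (s - t) ≤ g s - g t ∧ g s - g t ≤ β * (s - t) := by
  have hcont : ContinuousOn g (Set.Ici 0) := fun x hx =>
    (hderiv x hx).continuousWithinAt
  have hint : interior (Set.Ici (0:ℝ)) = Set.Ioi 0 := interior_Ici
  have hda : ∀ x ∈ interior (Set.Ici (0:ℝ)), HasDerivAt g (dg x) x := by
    intro x hx
    rw [hint] at hx
    exact (hderiv x (Set.mem_Ici.2 (le_of_lt (Set.mem_Ioi.1 hx)))).hasDerivAt (Ici_mem_nhds (Set.mem_Ioi.1 hx))
  have hdiff : DifferentiableOn ℝ g (interior (Set.Ici (0:ℝ))) := fun x hx =>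
    ((hda x hx).differentiableAt).differentiableWithinAt
  have hd1 : ∀ x ∈ interior (Set.Ici (0:ℝ)), α ≤ deriv g x := by
    intro x hx
    rw [(hda x hx).deriv]
    exact (hbnd x (by rw [hint] at hx; exact Set.mem_Ici.2 (le_of_lt (Set.mem_Ioi.1 hx)))).1
  have hd2 : ∀ x ∈ interior (Set.Ici (0:ℝ)), deriv g x ≤ β := by
    intro x hx
    rw [(hda x hx).deriv]
    exact (hbnd x (by rw [hint] at hx; exact Set.mem_Ici.2 (le_of_lt (Set.mem_Ioi.1 hx)))).2
  intro t ht s hs hts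
  exact ⟨(convex_Ici 0).mul_sub_le_image_sub_of_le_deriv hcont hdiff hd1 t ht s hs hts,
    (convex_Ici 0).image_sub_le_mul_sub_of_deriv_le hcont hdiff hd2 t ht s hs hts⟩

end Pointwise


noncomputable def stmt15_h (g : ℝ → ℝ) {E : Type*} [NormedAddCommGroup E]
    [InnerProductSpace ℝ E] (r : E) : E := (g ‖r‖ / ‖r‖) • r

section Pointwise

variable {E : Type*} [NormedAddCommGroup E] [InnerProductSpace ℝ E]
variable {g : ℝ → ℝ} {α β : ℝ}

lemma stmt15_glin (hα : 0 < α)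
    (hmvt : ∀ t ∈ Set.Ici (0:ℝ), ∀ s ∈ Set.Ici (0:ℝ), t ≤ s →
      α * (s - t) ≤ g s - g t ∧ g s - g t ≤ β * (s - t))
    (hg0 : g 0 = 0) : ∀ s : ℝ, 0 ≤ s → α * s ≤ g s ∧ g s ≤ β * s := by
  intro s hs
  have := hmvt 0 Set.self_mem_Ici s hs hs
  rw [hg0, sub_zero, sub_zero] at this
  exact this

lemma stmt15_gabs (hα : 0 < α) (hαβ : α ≤ β)
    (hmvt : ∀ t ∈ Set.Ici (0:ℝ), ∀ s ∈ Set.Ici (0:ℝ), t ≤ s →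
      α * (s - t) ≤ g s - g t ∧ g s - g t ≤ β * (s - t)) :
    ∀ t ∈ Set.Ici (0:ℝ), ∀ s ∈ Set.Ici (0:ℝ), |g s - g t| ≤ β * |s - t| := by
  intro t ht s hs
  rcases le_total t s with h | h
  · obtain ⟨h1, h2⟩ := hmvt t ht s hs h
    have h0 : (0:ℝ) ≤ g s - g t := le_trans (by nlinarith) h1
    rw [abs_of_nonneg h0, abs_of_nonneg (by linarith)]
    exact h2
  · obtain ⟨h1, h2⟩ := hmvt s hs t ht h
    have h0 : (0:ℝ) ≤ g t - g s := le_trans (by nlinarith) h1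
    rw [abs_of_nonpos (by linarith), abs_of_nonpos (by linarith)]
    linarith

lemma stmt15_h_norm_le (hα : 0 < α) (hαβ : α ≤ β)
    (hmvt : ∀ t ∈ Set.Ici (0:ℝ), ∀ s ∈ Set.Ici (0:ℝ), t ≤ s →
      α * (s - t) ≤ g s - g t ∧ g s - g t ≤ β * (s - t))
    (hg0 : g 0 = 0) (r : E) : ‖stmt15_h g r‖ ≤ β * ‖r‖ := by
  rcases eq_or_ne r 0 with rfl | hr
  · simp [stmt15_h]
  · have hs : (0:ℝ) < ‖r‖ := norm_pos_iff.2 hr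
    obtain ⟨h1, h2⟩ := stmt15_glin hα hmvt hg0 ‖r‖ hs.le
    have hgn : 0 ≤ g ‖r‖ := le_trans (by positivity) h1
    rw [stmt15_h, norm_smul, Real.norm_eq_abs, abs_div, abs_of_nonneg hgn,
      abs_of_pos hs, div_mul_cancel₀ _ (ne_of_gt hs)]
    exact h2

lemma stmt15_h_lipschitz (hα : 0 < α) (hαβ : α ≤ β)
    (hmvt : ∀ t ∈ Set.Ici (0:ℝ), ∀ s ∈ Set.Ici (0:ℝ), t ≤ s →
      α * (s - t) ≤ g s - g t ∧ g s - g t ≤ β * (s - t))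
    (hg0 : g 0 = 0) (r r' : E) :
    ‖stmt15_h g r - stmt15_h g r'‖ ≤ 3 * β * ‖r - r'‖ := by
  have hβ : 0 < β := lt_of_lt_of_le hα hαβ
  rcases eq_or_ne r' 0 with rfl | hr'
  · simp only [sub_zero, stmt15_h, norm_zero, hg0]
    rw [show ((0:ℝ)/0) • (0:E) = 0 by simp, sub_zero]
    calc ‖stmt15_h g r‖ ≤ β * ‖r‖ := stmt15_h_norm_le hα hαβ hmvt hg0 r
      _ ≤ 3 * β * ‖r‖ := by nlinarith [norm_nonneg r]
  rcases eq_or_ne r 0 with rfl | hr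
  · rw [show stmt15_h g (0:E) = 0 by simp [stmt15_h], zero_sub, norm_neg, zero_sub, norm_neg]
    calc ‖stmt15_h g r'‖ ≤ β * ‖r'‖ := stmt15_h_norm_le hα hαβ hmvt hg0 r'
      _ ≤ 3 * β * ‖r'‖ := by nlinarith [norm_nonneg r']
  · set s := ‖r‖ with hsdef
    set t := ‖r'‖ with htdef
    have hs : (0:ℝ) < s := norm_pos_iff.2 hr
    have ht : (0:ℝ) < t := norm_pos_iff.2 hr'
    set ps := g s / s with hpsdef
    set pt := g t / t with hptdef
    obtain ⟨hgs1, hgs2⟩ := stmt15_glin hα hmvt hg0 s hs.le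
    obtain ⟨hgt1, hgt2⟩ := stmt15_glin hα hmvt hg0 t ht.le
    have hps : α ≤ ps ∧ ps ≤ β := ⟨(le_div_iff₀ hs).2 (by linarith), (div_le_iff₀ hs).2 (by linarith)⟩
    have hpt : α ≤ pt ∧ pt ≤ β := ⟨(le_div_iff₀ ht).2 (by linarith), (div_le_iff₀ ht).2 (by linarith)⟩
    have key : stmt15_h g r - stmt15_h g r' = ps • (r - r') + (ps - pt) • r' := by
      rw [stmt15_h, stmt15_h, ← hsdef, ← htdef, ← hpsdef, ← hptdef]
      module
    have habs : |s - t| ≤ ‖r - r'‖ := abs_norm_sub_norm_le r r'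
    have hgab := stmt15_gabs hα hαβ hmvt t ht.le s hs.le
    have e1 : (ps - pt) * t = ps * (t - s) + (g s - g t) := by
      field_simp [hpsdef, hptdef]
      linear_combination (div_mul_cancel₀ (g s) (ne_of_gt hs) : ps * s = g s) - (div_mul_cancel₀ (g t) (ne_of_gt ht) : pt * t = g t)
    have e2 : |(ps - pt) * t| ≤ 2 * β * |s - t| := by
      rw [e1]
      calc |ps * (t - s) + (g s - g t)| ≤ |ps * (t - s)| + |g s - g t| := abs_add_le _ _
        _ ≤ β * |s - t| + β * |s - t| := by
            refine add_le_add ?_ hgab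
            rw [abs_mul, abs_of_nonneg (le_trans hα.le hps.1), abs_sub_comm]
            exact mul_le_mul_of_nonneg_right hps.2 (abs_nonneg _)
        _ = 2 * β * |s - t| := by ring
    calc ‖stmt15_h g r - stmt15_h g r'‖ ≤ ‖ps • (r - r')‖ + ‖(ps - pt) • r'‖ := by
          rw [key]; exact norm_add_le _ _
      _ = |ps| * ‖r - r'‖ + |(ps - pt) * t| := by
          rw [norm_smul, norm_smul, Real.norm_eq_abs, Real.norm_eq_abs, ← htdef, abs_mul,
            abs_of_pos ht]
      _ ≤ β * ‖r - r'‖ + 2 * β * ‖r - r'‖ := by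
          refine add_le_add ?_ (le_trans e2 (by nlinarith))
          rw [abs_of_nonneg (le_trans hα.le hps.1)]
          exact mul_le_mul_of_nonneg_right hps.2 (norm_nonneg _)
      _ = 3 * β * ‖r - r'‖ := by ring

lemma stmt15_h_mono (hα : 0 < α) (hαβ : α ≤ β)
    (hmvt : ∀ t ∈ Set.Ici (0:ℝ), ∀ s ∈ Set.Ici (0:ℝ), t ≤ s →
      α * (s - t) ≤ g s - g t ∧ g s - g t ≤ β * (s - t))
    (hg0 : g 0 = 0) (r r' : E) :
    α * ‖r - r'‖ ^ 2 ≤ ⟪stmt15_h g r - stmt15_h g r', r - r'⟫ := by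
  have hinner : ∀ x : E, x ≠ 0 → ⟪stmt15_h g x, x⟫ = (g ‖x‖ / ‖x‖) * ‖x‖ ^ 2 := by
    intro x hx
    rw [stmt15_h, real_inner_smul_left, real_inner_self_eq_norm_sq]
  rcases eq_or_ne r' 0 with rfl | hr'
  · rcases eq_or_ne r 0 with rfl | hr
    · simp
    · have hs : (0:ℝ) < ‖r‖ := norm_pos_iff.2 hr
      obtain ⟨h1, _⟩ := stmt15_glin hα hmvt hg0 ‖r‖ hs.le
      rw [sub_zero, show stmt15_h g (0:E) = 0 by simp [stmt15_h], sub_zero, hinner r hr]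
      rw [div_mul_eq_mul_div, pow_two, ← mul_assoc, mul_div_assoc, mul_div_assoc,
        div_self (ne_of_gt hs), mul_one]
      nlinarith
  rcases eq_or_ne r 0 with rfl | hr
  · have ht : (0:ℝ) < ‖r'‖ := norm_pos_iff.2 hr'
    obtain ⟨h1, _⟩ := stmt15_glin hα hmvt hg0 ‖r'‖ ht.le
    rw [show stmt15_h g (0:E) = 0 by simp [stmt15_h], zero_sub, zero_sub, inner_neg_neg,
      hinner r' hr', norm_neg]
    rw [div_mul_eq_mul_div, pow_two, ← mul_assoc, mul_div_assoc, mul_div_assoc,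
      div_self (ne_of_gt ht), mul_one]
    nlinarith
  · set s := ‖r‖ with hsdef
    set t := ‖r'‖ with htdef
    have hs : (0:ℝ) < s := norm_pos_iff.2 hr
    have ht : (0:ℝ) < t := norm_pos_iff.2 hr'
    set ps := g s / s with hpsdef
    set pt := g t / t with hptdef
    obtain ⟨hgs1, hgs2⟩ := stmt15_glin hα hmvt hg0 s hs.le
    obtain ⟨hgt1, hgt2⟩ := stmt15_glin hα hmvt hg0 t ht.le
    have hps : α ≤ ps := (le_div_iff₀ hs).2 (by linarith)
    have hpt : α ≤ pt := (le_div_iff₀ ht).2 (by linarith)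
    have hpss : ps * s = g s := div_mul_cancel₀ _ (ne_of_gt hs)
    have hptt : pt * t = g t := div_mul_cancel₀ _ (ne_of_gt ht)
    set c := ⟪r, r'⟫ with hcdef
    have hc : c ≤ s * t := real_inner_le_norm r r'
    have h1 : α * (s - t) ^ 2 ≤ (ps * s - pt * t) * (s - t) := by
      rw [hpss, hptt]
      rcases le_total t s with h | h
      · obtain ⟨hl, _⟩ := hmvt t ht.le s hs.le h
        nlinarith
      · obtain ⟨hl, _⟩ := hmvt s hs.le t ht.le h
        nlinarith
    have expand : ⟪stmt15_h g r - stmt15_h g r', r - r'⟫ =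
        ps * s ^ 2 + pt * t ^ 2 - (ps + pt) * c := by
      rw [stmt15_h, stmt15_h, ← hsdef, ← htdef, ← hpsdef, ← hptdef, inner_sub_left,
        real_inner_smul_left, real_inner_smul_left, inner_sub_right, inner_sub_right,
        real_inner_self_eq_norm_sq, real_inner_self_eq_norm_sq, real_inner_comm r r',
        ← hcdef]
      ring
    have hnorm : ‖r - r'‖ ^ 2 = s ^ 2 - 2 * c + t ^ 2 := by
      rw [norm_sub_sq_real, ← hsdef, ← htdef, ← hcdef]
    rw [expand, hnorm]
    nlinarith [mul_nonneg (by linarith : (0:ℝ) ≤ ps + pt - 2 * α) (by linarith : (0:ℝ) ≤ s * t - c)]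

end Pointwise


lemma stmt15_sqle {a b : ℝ} (ha : 0 ≤ a) (hb : 0 ≤ b) (h : a ^ 2 ≤ b ^ 2) : a ≤ b := by
  nlinarith

lemma stmt15_existsUnique {V : Type*} [NormedAddCommGroup V] [InnerProductSpace ℝ V]
    [CompleteSpace V] (B : V → V) (w : V) (α L : ℝ) (hα : 0 < α) (hαL : α ≤ L)
    (hmono : ∀ u v : V, α * ‖u - v‖ ^ 2 ≤ ⟪B u - B v, u - v⟫)
    (hlip : ∀ u v : V, ‖B u - B v‖ ≤ L * ‖u - v‖) :
    ∃! u : V, B u = w := by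
  have hL : 0 < L := lt_of_lt_of_le hα hαL
  set t : ℝ := α / L ^ 2 with htdef
  have ht : 0 < t := by positivity
  have hfrac : α ^ 2 / L ^ 2 ≤ 1 := by
    rw [div_le_one (by positivity)]
    nlinarith
  have hfrac0 : 0 < α ^ 2 / L ^ 2 := by positivity
  set K : ℝ := Real.sqrt (1 - α ^ 2 / L ^ 2) with hKdef
  have hK0 : 0 ≤ K := Real.sqrt_nonneg _
  have hKsq : K ^ 2 = 1 - α ^ 2 / L ^ 2 := Real.sq_sqrt (by linarith)
  have hK1 : K < 1 := by nlinarith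
  have hcontr : ∀ u v : V,
      ‖(u - t • (B u - w)) - (v - t • (B v - w))‖ ^ 2 ≤ (K * ‖u - v‖) ^ 2 := by
    intro u v
    have e : (u - t • (B u - w)) - (v - t • (B v - w)) = (u - v) - t • (B u - B v) := by
      module
    rw [e, norm_sub_sq_real, real_inner_smul_right, real_inner_comm, norm_smul,
      Real.norm_eq_abs, abs_of_pos ht]
    have h1 := hmono u v
    have h2 := hlip u v
    have h3 : ‖B u - B v‖ ^ 2 ≤ L ^ 2 * ‖u - v‖ ^ 2 := by
      nlinarith [norm_nonneg (B u - B v), norm_nonneg (u - v)]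
    have ht2 : t * L ^ 2 = α := by rw [htdef]; field_simp
    have hta : t * α = α ^ 2 / L ^ 2 := by rw [htdef]; field_simp
    have hrhs : (K * ‖u - v‖) ^ 2 = (1 - α ^ 2 / L ^ 2) * ‖u - v‖ ^ 2 := by
      rw [mul_pow, hKsq]
    have hta2 : t * α * ‖u - v‖ ^ 2 = α ^ 2 / L ^ 2 * ‖u - v‖ ^ 2 := by rw [hta]
    have ht3 : t ^ 2 * (L ^ 2 * ‖u - v‖ ^ 2) = t * α * ‖u - v‖ ^ 2 := by
      rw [← ht2]; ring
    rw [hrhs]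
    nlinarith [mul_le_mul_of_nonneg_left h1 ht.le,
      mul_le_mul_of_nonneg_left h3 (sq_nonneg t), hta2, ht3]
  have hlipΦ : ∀ u v : V,
      ‖(u - t • (B u - w)) - (v - t • (B v - w))‖ ≤ K * ‖u - v‖ := fun u v =>
    stmt15_sqle (norm_nonneg _) (by positivity) (hcontr u v)
  have hcw : ContractingWith K.toNNReal (fun u : V => u - t • (B u - w)) := by
    constructor
    · exact_mod_cast (by rwa [Real.coe_toNNReal K hK0] : (K.toNNReal : ℝ) < 1)
    · apply LipschitzWith.of_dist_le_mul
      intro u v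
      rw [dist_eq_norm, dist_eq_norm, Real.coe_toNNReal K hK0]
      exact hlipΦ u v
  haveI : Nonempty V := ⟨0⟩
  have hfix := hcw.fixedPoint_isFixedPt
  set u₀ := ContractingWith.fixedPoint (fun u : V => u - t • (B u - w)) hcw with hu₀
  have hBu₀ : B u₀ = w := by
    have : u₀ - t • (B u₀ - w) = u₀ := hfix
    have h0 : t • (B u₀ - w) = 0 := by
      have := congrArg (fun z => u₀ - z) this
      simpa using this
    rcases smul_eq_zero.1 h0 with h | h
    · exact absurd h (ne_of_gt ht)
    · exact sub_eq_zero.1 h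
  refine ⟨u₀, hBu₀, ?_⟩
  intro u' hu'
  have := hmono u' u₀
  rw [hu', hBu₀, sub_self] at this
  simp only [inner_zero_left] at this
  have : ‖u' - u₀‖ ^ 2 ≤ 0 := by nlinarith
  have : u' - u₀ = 0 := by
    rw [← norm_eq_zero]
    nlinarith [norm_nonneg (u' - u₀)]
  exact sub_eq_zero.1 this


section Helpers

lemma stmt15_toLp_inner {X : Type*} [MeasurableSpace X] {μ : Measure X}
    {E : Type*} [NormedAddCommGroup E] [InnerProductSpace ℝ E]
    {f₁ f₂ : X → E} (h₁ : MemLp f₁ 2 μ) (h₂ : MemLp f₂ 2 μ) :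
    ⟪h₁.toLp f₁, h₂.toLp f₂⟫ = ∫ x, ⟪f₁ x, f₂ x⟫ ∂μ := by
  rw [MeasureTheory.L2.inner_def]
  refine integral_congr_ae ?_
  filter_upwards [h₁.coeFn_toLp, h₂.coeFn_toLp] with x e1 e2
  rw [e1, e2]

lemma stmt15_toLp_normsq {X : Type*} [MeasurableSpace X] {μ : Measure X}
    {E : Type*} [NormedAddCommGroup E] [InnerProductSpace ℝ E]
    {f : X → E} (h : MemLp f 2 μ) :
    ‖h.toLp f‖ ^ 2 = ∫ x, ‖f x‖ ^ 2 ∂μ := by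
  have h1 : ‖h.toLp f‖ ^ 2 = ⟪h.toLp f, h.toLp f⟫ := (real_inner_self_eq_norm_sq _).symm
  rw [h1, stmt15_toLp_inner h h]
  refine integral_congr_ae (Filter.Eventually.of_forall fun x => ?_)
  exact real_inner_self_eq_norm_sq _

end Helpers


/-- uniform well-posedness of the parametric curl–curl problem. For ρ-almost
all `y`, the operator `⟨A(y)u, v⟩ = ∫_D h(y, curl u)·curl v dx` with
`h(y,r) = (f(y,|r|)/|r|) r` is strongly monotone with constant `α` and Lipschitz with
constant `3β`, and the problem `A(y)u = F`, `F(v) = (J, v)_{L²}`, has a unique solution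
with `‖u(y)‖_V ≤ C_F ‖J‖₂ / α`. -/
theorem stmt15 {V X Γ : Type*} [NormedAddCommGroup V] [InnerProductSpace ℝ V]
    [CompleteSpace V] [MeasurableSpace X] (μ : Measure X)
    [MeasurableSpace Γ] (P : Measure Γ) [IsProbabilityMeasure P]
    (curl : V →ₗ[ℝ] (X → EuclideanSpace ℝ (Fin 3)))
    (hnormV : ∀ v : V, ‖v‖ ^ 2 = ∫ x, ‖curl v x‖ ^ 2 ∂μ)
    (hmem : ∀ v : V, MemLp (curl v) 2 μ)
    (emb : V →ₗ[ℝ] (X → EuclideanSpace ℝ (Fin 3)))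
    (hembmem : ∀ v : V, MemLp (emb v) 2 μ)
    (f df : Γ → ℝ → ℝ) (α β : ℝ) (hα : 0 < α) (hαβ : α ≤ β)
    (hf : ∀ᵐ y ∂P, f y 0 = 0 ∧
      (∀ s ∈ Set.Ici (0:ℝ), HasDerivWithinAt (f y) (df y s) (Set.Ici 0) s) ∧
      (∀ s ∈ Set.Ici (0:ℝ), α ≤ df y s ∧ df y s ≤ β))
    (A : Γ → V → V → ℝ)
    (hA : ∀ y : Γ, ∀ u v : V, A y u v =
      ∫ x, ⟪(f y ‖curl u x‖ / ‖curl u x‖) • curl u x, curl v x⟫ ∂μ)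
    (J : X → EuclideanSpace ℝ (Fin 3)) (hJmem : MemLp J 2 μ)
    (Jn CF : ℝ) (hJn0 : 0 ≤ Jn) (hJn : Jn ^ 2 = ∫ x, ‖J x‖ ^ 2 ∂μ) (hCF : 0 ≤ CF)
    (hPF : ∀ v : V, ∫ x, ‖emb v x‖ ^ 2 ∂μ ≤ CF ^ 2 * ‖v‖ ^ 2)
    (F : V → ℝ) (hF : ∀ v : V, F v = ∫ x, ⟪J x, emb v x⟫ ∂μ) :
    ∀ᵐ y ∂P,
      (∀ u v : V, α * ‖u - v‖ ^ 2 ≤ A y u (u - v) - A y v (u - v)) ∧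
      (∀ u v w : V, |A y u w - A y v w| ≤ 3 * β * ‖u - v‖ * ‖w‖) ∧
      (∃! uy : V, ∀ v : V, A y uy v = F v) ∧
      (∀ uy : V, (∀ v : V, A y uy v = F v) → ‖uy‖ ≤ CF * Jn / α) := by
  have hβ : 0 < β := lt_of_lt_of_le hα hαβ
  filter_upwards [hf] with y hy
  obtain ⟨hg0, hderiv, hbnd⟩ := hy
  set g : ℝ → ℝ := f y with hgdef
  have hmvt := stmt15_mvt (g := g) (df y) hderiv hbnd
  -- continuity and membership of the superposition
  have hlipw : LipschitzWith (3 * β).toNNReal (stmt15_h g (E := EuclideanSpace ℝ (Fin 3))) := by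
    apply LipschitzWith.of_dist_le_mul
    intro r r'
    rw [dist_eq_norm, dist_eq_norm, Real.coe_toNNReal _ (by positivity)]
    exact stmt15_h_lipschitz hα hαβ hmvt hg0 r r'
  have hcont : Continuous (stmt15_h g (E := EuclideanSpace ℝ (Fin 3))) := hlipw.continuous
  have hmemh : ∀ u : V, MemLp (fun x => stmt15_h g (curl u x)) 2 μ := by
    intro u
    refine MemLp.of_le_mul (c := β) (hmem u) (hcont.comp_aestronglyMeasurable (hmem u).1)
      (Filter.Eventually.of_forall fun x => ?_)
    simpa using stmt15_h_norm_le hα hαβ hmvt hg0 (curl u x)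
  -- Lp elements
  set C : V → Lp (EuclideanSpace ℝ (Fin 3)) 2 μ := fun v => (hmem v).toLp (curl v) with hCdef
  set HM : V → Lp (EuclideanSpace ℝ (Fin 3)) 2 μ := fun u => (hmemh u).toLp _ with hHMdef
  have hAinner : ∀ u v : V, A y u v = ⟪HM u, C v⟫ := by
    intro u v
    rw [hA y u v, hCdef, hHMdef, stmt15_toLp_inner (hmemh u) (hmem v)]
    rfl
  have hCnorm : ∀ v : V, ‖C v‖ = ‖v‖ := by
    intro v
    have h1 : ‖C v‖ ^ 2 = ‖v‖ ^ 2 := by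
      rw [hCdef, stmt15_toLp_normsq (hmem v), hnormV]
    have h2 := stmt15_sqle (norm_nonneg (C v)) (norm_nonneg v) h1.le
    have h3 := stmt15_sqle (norm_nonneg v) (norm_nonneg (C v)) h1.ge
    linarith
  have hCsub : ∀ u v : V, C (u - v) = C u - C v := by
    intro u v
    have e : curl (u - v) = curl u - curl v := map_sub curl u v
    calc C (u - v) = ((hmem u).sub (hmem v)).toLp (curl u - curl v) :=
          MemLp.toLp_congr _ _ (Filter.Eventually.of_forall fun x => by rw [e])
      _ = C u - C v := MemLp.toLp_sub _ _
  -- key nonnegativity for monotonicity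
  have hGnonneg : ∀ u v : V, 0 ≤ ⟪HM u - HM v - α • (C u - C v), C u - C v⟫ := by
    intro u v
    have e : curl (u - v) = curl u - curl v := map_sub curl u v
    have hmemG : MemLp (fun x => stmt15_h g (curl u x) - stmt15_h g (curl v x)
        - α • (curl (u - v) x)) 2 μ :=
      ((hmemh u).sub (hmemh v)).sub ((hmem (u - v)).const_smul α)
    have eG : HM u - HM v - α • (C u - C v) = hmemG.toLp _ := by
      rw [← hCsub u v]
      rw [hHMdef, hCdef]
      rw [← MemLp.toLp_const_smul α (hmem (u - v)), ← MemLp.toLp_sub, ← MemLp.toLp_sub]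
      rfl
    have eD : C u - C v = (hmem (u - v)).toLp _ := (hCsub u v).symm
    rw [eG, eD, stmt15_toLp_inner]
    refine integral_nonneg fun x => ?_
    simp only [Pi.zero_apply]
    have e2 : curl (u - v) x = curl u x - curl v x := by rw [e]; rfl
    rw [e2]
    have hm := stmt15_h_mono hα hαβ hmvt hg0 (curl u x) (curl v x)
    rw [inner_sub_left, real_inner_smul_left, real_inner_self_eq_norm_sq]
    linarith
  -- item (i): strong monotonicity
  have item1 : ∀ u v : V, α * ‖u - v‖ ^ 2 ≤ A y u (u - v) - A y v (u - v) := by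
    intro u v
    have key := hGnonneg u v
    rw [inner_sub_left, inner_sub_left, real_inner_smul_left,
      real_inner_self_eq_norm_sq] at key
    have e1 : ‖C u - C v‖ = ‖u - v‖ := by rw [← hCsub, hCnorm]
    rw [e1] at key
    rw [hAinner u (u - v), hAinner v (u - v), hCsub u v]
    linarith
  -- Lipschitz bound for HM
  have hHMlip : ∀ u v : V, ‖HM u - HM v‖ ≤ 3 * β * ‖u - v‖ := by
    intro u v
    have e : curl (u - v) = curl u - curl v := map_sub curl u v
    have hmemD : MemLp (fun x => stmt15_h g (curl u x) - stmt15_h g (curl v x)) 2 μ :=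
      (hmemh u).sub (hmemh v)
    have eHM : HM u - HM v = hmemD.toLp _ := by
      rw [hHMdef, ← MemLp.toLp_sub]
      rfl
    have hint : Integrable (fun x => ‖curl (u - v) x‖ ^ 2) μ := by
      have h1 : Integrable (fun x => ⟪(C (u - v) : X → EuclideanSpace ℝ (Fin 3)) x, (C (u - v) : X → EuclideanSpace ℝ (Fin 3)) x⟫) μ :=
        MeasureTheory.L2.integrable_inner (𝕜 := ℝ) (C (u - v)) (C (u - v))
      refine h1.congr ?_
      filter_upwards [(hmem (u - v)).coeFn_toLp] with x hx
      rw [hx, real_inner_self_eq_norm_sq]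
    have hsq : ‖HM u - HM v‖ ^ 2 ≤ (3 * β) ^ 2 * ‖u - v‖ ^ 2 := by
      rw [eHM, stmt15_toLp_normsq]
      have hb : ∀ x : X, ‖stmt15_h g (curl u x) - stmt15_h g (curl v x)‖ ^ 2 ≤
          (3 * β) ^ 2 * ‖curl (u - v) x‖ ^ 2 := by
        intro x
        have e2 : curl (u - v) x = curl u x - curl v x := by rw [e]; rfl
        rw [e2, ← mul_pow]
        exact pow_le_pow_left₀ (norm_nonneg _)
          (stmt15_h_lipschitz hα hαβ hmvt hg0 (curl u x) (curl v x)) 2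
      calc ∫ x, ‖stmt15_h g (curl u x) - stmt15_h g (curl v x)‖ ^ 2 ∂μ
          ≤ ∫ x, (3 * β) ^ 2 * ‖curl (u - v) x‖ ^ 2 ∂μ := by
            refine integral_mono_of_nonneg (Filter.Eventually.of_forall fun x => by positivity)
              (hint.const_mul _) (Filter.Eventually.of_forall hb)
        _ = (3 * β) ^ 2 * ∫ x, ‖curl (u - v) x‖ ^ 2 ∂μ := integral_const_mul _ _
        _ = (3 * β) ^ 2 * ‖u - v‖ ^ 2 := by rw [← hnormV]
    have := stmt15_sqle (a := ‖HM u - HM v‖) (b := 3 * β * ‖u - v‖)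
      (norm_nonneg (HM u - HM v)) (by positivity) (by
      calc ‖HM u - HM v‖ ^ 2 ≤ (3 * β) ^ 2 * ‖u - v‖ ^ 2 := hsq
        _ = (3 * β * ‖u - v‖) ^ 2 := by ring)
    exact this
  -- item (ii): Lipschitz continuity of A
  have item2 : ∀ u v w : V, |A y u w - A y v w| ≤ 3 * β * ‖u - v‖ * ‖w‖ := by
    intro u v w
    rw [hAinner u w, hAinner v w, ← inner_sub_left]
    calc |⟪HM u - HM v, C w⟫| ≤ ‖HM u - HM v‖ * ‖C w‖ := abs_real_inner_le_norm _ _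
      _ ≤ 3 * β * ‖u - v‖ * ‖w‖ := by
          rw [hCnorm]
          exact mul_le_mul_of_nonneg_right (hHMlip u v) (norm_nonneg w)
  -- linearity of C and Em
  have hCadd : ∀ u v : V, C (u + v) = C u + C v := by
    intro u v
    have e : curl (u + v) = curl u + curl v := map_add curl u v
    calc C (u + v) = ((hmem u).add (hmem v)).toLp (curl u + curl v) :=
          MemLp.toLp_congr _ _ (Filter.Eventually.of_forall fun x => by rw [e])
      _ = C u + C v := MemLp.toLp_add _ _
  have hCsmul : ∀ (c : ℝ) (v : V), C (c • v) = c • C v := by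
    intro c v
    have e : curl (c • v) = c • curl v := map_smul curl c v
    calc C (c • v) = ((hmem v).const_smul c).toLp (c • curl v) :=
          MemLp.toLp_congr _ _ (Filter.Eventually.of_forall fun x => by rw [e])
      _ = c • C v := MemLp.toLp_const_smul c _
  set JL : Lp (EuclideanSpace ℝ (Fin 3)) 2 μ := hJmem.toLp J with hJLdef
  set Em : V → Lp (EuclideanSpace ℝ (Fin 3)) 2 μ := fun v => (hembmem v).toLp (emb v) with hEmdef
  have hEmadd : ∀ u v : V, Em (u + v) = Em u + Em v := by
    intro u v
    have e : emb (u + v) = emb u + emb v := map_add emb u v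
    calc Em (u + v) = ((hembmem u).add (hembmem v)).toLp (emb u + emb v) :=
          MemLp.toLp_congr _ _ (Filter.Eventually.of_forall fun x => by rw [e])
      _ = Em u + Em v := MemLp.toLp_add _ _
  have hEmsmul : ∀ (c : ℝ) (v : V), Em (c • v) = c • Em v := by
    intro c v
    have e : emb (c • v) = c • emb v := map_smul emb c v
    calc Em (c • v) = ((hembmem v).const_smul c).toLp (c • emb v) :=
          MemLp.toLp_congr _ _ (Filter.Eventually.of_forall fun x => by rw [e])
      _ = c • Em v := MemLp.toLp_const_smul c _
  have hFinner : ∀ v : V, F v = ⟪JL, Em v⟫ := by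
    intro v
    rw [hF v]
    exact (stmt15_toLp_inner hJmem (hembmem v)).symm
  have hJLnorm : ‖JL‖ = Jn := by
    have h1 : ‖JL‖ ^ 2 = Jn ^ 2 := by
      rw [hJn]
      exact stmt15_toLp_normsq hJmem
    have h2 := stmt15_sqle (norm_nonneg JL) hJn0 h1.le
    have h3 := stmt15_sqle hJn0 (norm_nonneg JL) h1.ge
    linarith
  have hEmnorm : ∀ v : V, ‖Em v‖ ≤ CF * ‖v‖ := by
    intro v
    refine stmt15_sqle (norm_nonneg _) (by positivity) ?_
    calc ‖Em v‖ ^ 2 = ∫ x, ‖emb v x‖ ^ 2 ∂μ := stmt15_toLp_normsq (hembmem v)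
      _ ≤ CF ^ 2 * ‖v‖ ^ 2 := hPF v
      _ = (CF * ‖v‖) ^ 2 := by ring
  -- Riesz representation of A y u and of F
  have hrep : ∀ u : V, ∃ Bu : V, ∀ v : V, ⟪Bu, v⟫ = A y u v := by
    intro u
    let φ : V →ₗ[ℝ] ℝ :=
      { toFun := fun v => ⟪HM u, C v⟫
        map_add' := fun v w => by rw [hCadd, inner_add_right]
        map_smul' := fun c v => by rw [hCsmul, real_inner_smul_right, RingHom.id_apply, smul_eq_mul] }
    have hφb : ∀ v : V, ‖φ v‖ ≤ ‖HM u‖ * ‖v‖ := by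
      intro v
      calc ‖φ v‖ = |⟪HM u, C v⟫| := rfl
        _ ≤ ‖HM u‖ * ‖C v‖ := abs_real_inner_le_norm _ _
        _ = ‖HM u‖ * ‖v‖ := by rw [hCnorm]
    refine ⟨(InnerProductSpace.toDual ℝ V).symm (φ.mkContinuous ‖HM u‖ hφb), fun v => ?_⟩
    rw [hAinner u v]
    exact InnerProductSpace.toDual_symm_apply
  choose B hB using hrep
  obtain ⟨w₀, hw₀⟩ : ∃ w₀ : V, ∀ v : V, ⟪w₀, v⟫ = F v := by
    let φ : V →ₗ[ℝ] ℝ :=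
      { toFun := fun v => ⟪JL, Em v⟫
        map_add' := fun v w => by rw [hEmadd, inner_add_right]
        map_smul' := fun c v => by rw [hEmsmul, real_inner_smul_right, RingHom.id_apply, smul_eq_mul] }
    have hφb : ∀ v : V, ‖φ v‖ ≤ (‖JL‖ * CF) * ‖v‖ := by
      intro v
      calc ‖φ v‖ = |⟪JL, Em v⟫| := rfl
        _ ≤ ‖JL‖ * ‖Em v‖ := abs_real_inner_le_norm _ _
        _ ≤ ‖JL‖ * (CF * ‖v‖) := mul_le_mul_of_nonneg_left (hEmnorm v) (norm_nonneg _)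
        _ = (‖JL‖ * CF) * ‖v‖ := by ring
    refine ⟨(InnerProductSpace.toDual ℝ V).symm (φ.mkContinuous _ hφb), fun v => ?_⟩
    rw [hFinner v]
    exact InnerProductSpace.toDual_symm_apply
  -- B is strongly monotone and Lipschitz
  have hmonoB : ∀ u v : V, α * ‖u - v‖ ^ 2 ≤ ⟪B u - B v, u - v⟫ := by
    intro u v
    rw [inner_sub_left, hB u (u - v), hB v (u - v)]
    exact item1 u v
  have hlipB : ∀ u v : V, ‖B u - B v‖ ≤ 3 * β * ‖u - v‖ := by
    intro u v
    have h1 : ‖B u - B v‖ ^ 2 = A y u (B u - B v) - A y v (B u - B v) := by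
      rw [← hB u (B u - B v), ← hB v (B u - B v), ← inner_sub_left,
        real_inner_self_eq_norm_sq]
    have h3 : ‖B u - B v‖ ^ 2 ≤ 3 * β * ‖u - v‖ * ‖B u - B v‖ := by
      rw [h1]
      exact (le_abs_self _).trans (item2 u v (B u - B v))
    rcases (norm_nonneg (B u - B v)).eq_or_lt' with h | h
    · calc ‖B u - B v‖ = 0 := h
        _ ≤ 3 * β * ‖u - v‖ := by positivity
    · nlinarith
  obtain ⟨u₀, hu₀, huniq⟩ := stmt15_existsUnique B w₀ α (3 * β) hα (by linarith) hmonoB hlipB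
  have hiff : ∀ u' : V, (∀ v : V, A y u' v = F v) ↔ B u' = w₀ := by
    intro u'
    constructor
    · intro h
      have hz : ∀ v : V, ⟪B u' - w₀, v⟫ = (0:ℝ) := by
        intro v
        rw [inner_sub_left, hB u' v, hw₀ v, h v, sub_self]
      have := hz (B u' - w₀)
      rwa [inner_self_eq_zero, sub_eq_zero] at this
    · intro h v
      rw [← hB u' v, h, hw₀ v]
  have item3 : ∃! uy : V, ∀ v : V, A y uy v = F v :=
    ⟨u₀, (hiff u₀).2 hu₀, fun u' h => huniq u' ((hiff u').1 h)⟩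
  have hA0 : ∀ v : V, A y 0 v = 0 := by
    intro v
    rw [hA y 0 v]
    have h0 : curl (0:V) = 0 := map_zero curl
    simp [h0]
  have item4 : ∀ uy : V, (∀ v : V, A y uy v = F v) → ‖uy‖ ≤ CF * Jn / α := by
    intro uy huy
    have hm := item1 uy 0
    rw [sub_zero] at hm
    rw [hA0 uy, sub_zero] at hm
    have hFuy : F uy ≤ CF * Jn * ‖uy‖ := by
      rw [hFinner uy]
      calc ⟪JL, Em uy⟫ ≤ |⟪JL, Em uy⟫| := le_abs_self _
        _ ≤ ‖JL‖ * ‖Em uy‖ := abs_real_inner_le_norm _ _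
        _ ≤ Jn * (CF * ‖uy‖) := by
            rw [hJLnorm]
            exact mul_le_mul_of_nonneg_left (hEmnorm uy) hJn0
        _ = CF * Jn * ‖uy‖ := by ring
    rw [le_div_iff₀ hα]
    rcases (norm_nonneg uy).eq_or_lt' with h | h
    · rw [h, zero_mul]
      positivity
    · nlinarith [huy uy]
  exact ⟨item1, item2, item3, item4⟩
end
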